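/- Let V : ℤ → ℤ[T,T⁻¹] satisfy the Jones recurrence V(e+2) = (T³ − T)·V(e+1) + T⁴·V(e) for all e : ℤ. (a) If for some e both V(e) and V(e+1) have support contained in the nonnegative integers (they are polynomials in T), then for every k ≥ 2, V(e+k) has support contained in the nonnegative integers and V(e+k) ≠ 1. (b) If for some e both V(e) and V(e−1) have support contained in the nonpositive integers (they are polynomials in T⁻¹), then for every k ≥ 2, V(e−k) has support contained in the nonpositive integers and V(e−k) ≠ 1. -/

import Mathlib

open LaurentPolynomial in
private lemma T_mul_apply (a : ℤ) (f : LaurentPolynomial ℤ) (m : ℤ) :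
    (T a * f : LaurentPolynomial ℤ).coeff m = f.coeff (-a + m) := by
  have : (T a : LaurentPolynomial ℤ) = AddMonoidAlgebra.single a 1 := rfl
  rw [this]
  simpa using AddMonoidAlgebra.coeff_single_mul_apply f (1 : ℤ) a m

open LaurentPolynomial in
private lemma stepA (f g w : LaurentPolynomial ℤ)
    (hw : w = (T 3 - T 1) * f + T 4 * g)
    (hf : ∀ n ∈ f.coeff.support, 0 ≤ n)
    (hg : ∀ n ∈ g.coeff.support, 0 ≤ n) :
    ∀ n : ℤ, n ≤ 0 → w.coeff n = 0 := by
  intro n hn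
  have hf3 : f.coeff (-3 + n) = 0 := by
    by_contra h
    have := hf _ (Finsupp.mem_support_iff.mpr h); omega
  have hf1 : f.coeff (-1 + n) = 0 := by
    by_contra h
    have := hf _ (Finsupp.mem_support_iff.mpr h); omega
  have hg4 : g.coeff (-4 + n) = 0 := by
    by_contra h
    have := hg _ (Finsupp.mem_support_iff.mpr h); omega
  have : w = T 3 * f - T 1 * f + T 4 * g := by rw [hw]; ring
  rw [this]
  have h1 : (T 3 * f - T 1 * f + T 4 * g : LaurentPolynomial ℤ).coeff n
      = (T 3 * f : LaurentPolynomial ℤ).coeff n - (T 1 * f : LaurentPolynomial ℤ).coeff n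
        + (T 4 * g : LaurentPolynomial ℤ).coeff n := by
    rfl
  rw [h1, T_mul_apply, T_mul_apply, T_mul_apply, hf3, hf1, hg4]
  ring

open LaurentPolynomial in
private lemma stepB (f g w : LaurentPolynomial ℤ)
    (hw : T 4 * w = f - (T 3 - T 1) * g)
    (hf : ∀ n ∈ f.coeff.support, n ≤ 0)
    (hg : ∀ n ∈ g.coeff.support, n ≤ 0) :
    ∀ n : ℤ, 0 ≤ n → w.coeff n = 0 := by
  intro n hn
  have hw2 : w = T (-4) * f - T (-1) * g + T (-3) * g := by
    have h4 : (T (-4) : LaurentPolynomial ℤ) * T 4 = 1 := by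
      rw [← T_add]; norm_num
    calc w = T (-4) * (T 4 * w) := by rw [← mul_assoc, h4, one_mul]
    _ = T (-4) * (f - (T 3 - T 1) * g) := by rw [hw]
    _ = T (-4) * f - T (-4) * (T 3 * g) + T (-4) * (T 1 * g) := by ring
    _ = T (-4) * f - T (-1) * g + T (-3) * g := by
        rw [← mul_assoc, ← mul_assoc, ← T_add, ← T_add]; norm_num
  have hf4 : f.coeff (4 + n) = 0 := by
    by_contra h
    have := hf _ (Finsupp.mem_support_iff.mpr h); omega
  have hg1 : g.coeff (1 + n) = 0 := by
    by_contra h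
    have := hg _ (Finsupp.mem_support_iff.mpr h); omega
  have hg3 : g.coeff (3 + n) = 0 := by
    by_contra h
    have := hg _ (Finsupp.mem_support_iff.mpr h); omega
  rw [hw2]
  have h1 : (T (-4) * f - T (-1) * g + T (-3) * g : LaurentPolynomial ℤ).coeff n
      = (T (-4) * f : LaurentPolynomial ℤ).coeff n - (T (-1) * g : LaurentPolynomial ℤ).coeff n
        + (T (-3) * g : LaurentPolynomial ℤ).coeff n := by
    rfl
  rw [h1, T_mul_apply, T_mul_apply, T_mul_apply]
  norm_num [hf4, hg1, hg3]

private lemma one_apply_zero : (1 : LaurentPolynomial ℤ).coeff 0 = 1 := by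
  rw [AddMonoidAlgebra.one_def]
  exact Finsupp.single_eq_same

open LaurentPolynomial in
/-- **Proposition 5.1**. Let `V : ℤ → ℤ[T,T⁻¹]` satisfy the Jones recurrence.
(a) If `V e` and `V (e+1)` are polynomials in `T` (support in the nonnegative
integers), then for every `k ≥ 2`, `V (e+k)` is a polynomial in `T` different
from `1`. (b) If `V e` and `V (e−1)` are polynomials in `T⁻¹` (support in the
nonpositive integers), then for every `k ≥ 2`, `V (e−k)` is a polynomial in `T⁻¹`
different from `1`. -/
theorem jones_unit_avoidance (V : ℤ → LaurentPolynomial ℤ)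
    (hV : ∀ e : ℤ, V (e + 2) = (T 3 - T 1) * V (e + 1) + T 4 * V e) :
    (∀ e : ℤ,
      (∀ n ∈ (V e).coeff.support, 0 ≤ n) →
      (∀ n ∈ (V (e + 1)).coeff.support, 0 ≤ n) →
      ∀ k : ℕ, 2 ≤ k →
        (∀ n ∈ (V (e + k)).coeff.support, 0 ≤ n) ∧ V (e + k) ≠ 1) ∧
    (∀ e : ℤ,
      (∀ n ∈ (V e).coeff.support, n ≤ 0) →
      (∀ n ∈ (V (e - 1)).coeff.support, n ≤ 0) →
      ∀ k : ℕ, 2 ≤ k →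
        (∀ n ∈ (V (e - k)).coeff.support, n ≤ 0) ∧ V (e - k) ≠ 1) := by
  constructor
  · intro e h0 h1
    have Q : ∀ k : ℕ, ∀ n ∈ (V (e + k)).coeff.support, 0 ≤ n := by
      intro k
      induction k using Nat.twoStepInduction with
      | zero => simpa using h0
      | one => simpa using h1
      | more k ih1 ih2 =>
        have hk : e + ((k : ℤ) + 2) = (e + k) + 2 := by ring
        have hrec := hV (e + k)
        intro n hn
        by_contra hcon
        push_neg at hcon
        have hz : (V ((e + (k : ℤ)) + 2)).coeff n = 0 := by
          refine stepA (V (e + (k : ℤ) + 1)) (V (e + (k : ℤ)))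
            (V ((e + (k : ℤ)) + 2)) hrec ?_ ?_ n (by omega)
          · intro m hm
            have := ih2 m
            push_cast at this ⊢
            exact this (by rw [show e + ((k : ℤ) + 1) = e + (k : ℤ) + 1 by ring]; exact hm)
          · exact ih1
        push_cast at hn
        rw [show e + ((k : ℤ) + 2) = (e + k) + 2 by ring] at hn
        exact Finsupp.mem_support_iff.mp hn hz
    intro k hk
    obtain ⟨j, rfl⟩ : ∃ j, k = j + 2 := ⟨k - 2, by omega⟩
    have hrec := hV (e + j)
    have heq : e + ((j : ℕ) + 2 : ℕ) = (e + j) + 2 := by push_cast; ring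
    have key : ∀ n : ℤ, n ≤ 0 → (V ((e + (j : ℤ)) + 2)).coeff n = 0 := by
      refine stepA (V (e + (j : ℤ) + 1)) (V (e + (j : ℤ))) _ hrec ?_ (Q j)
      intro m hm
      have := Q (j + 1) m
      push_cast at this
      exact this (by rw [show e + ((j : ℤ) + 1) = e + (j : ℤ) + 1 by ring]; exact hm)
    rw [heq]
    constructor
    · intro n hn
      by_contra hcon
      push_neg at hcon
      exact Finsupp.mem_support_iff.mp hn (key n (by omega))
    · intro h
      have h0' := key 0 le_rfl
      rw [h, one_apply_zero] at h0'
      exact one_ne_zero h0'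
  · intro e h0 h1
    have Q : ∀ k : ℕ, ∀ n ∈ (V (e - k)).coeff.support, n ≤ 0 := by
      intro k
      induction k using Nat.twoStepInduction with
      | zero => simpa using h0
      | one => simpa using h1
      | more k ih1 ih2 =>
        have hrec := hV (e - ((k : ℤ) + 2))
        rw [show e - ((k : ℤ) + 2) + 2 = e - k by ring,
          show e - ((k : ℤ) + 2) + 1 = e - ((k : ℤ) + 1) by ring] at hrec
        have hw : T 4 * V (e - ((k : ℤ) + 2))
            = V (e - (k : ℤ)) - (T 3 - T 1) * V (e - ((k : ℤ) + 1)) := by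
          rw [hrec]; ring
        intro n hn
        by_contra hcon
        push_neg at hcon
        have hz : (V (e - ((k : ℤ) + 2))).coeff n = 0 := by
          refine stepB (V (e - (k : ℤ))) (V (e - ((k : ℤ) + 1))) _ hw ih1 ?_ n (by omega)
          intro m hm
          have := ih2 m
          push_cast at this
          exact this hm
        push_cast at hn
        exact Finsupp.mem_support_iff.mp hn hz
    intro k hk
    obtain ⟨j, rfl⟩ : ∃ j, k = j + 2 := ⟨k - 2, by omega⟩
    have hrec := hV (e - ((j : ℤ) + 2))
    rw [show e - ((j : ℤ) + 2) + 2 = e - j by ring,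
      show e - ((j : ℤ) + 2) + 1 = e - ((j : ℤ) + 1) by ring] at hrec
    have hw : T 4 * V (e - ((j : ℤ) + 2))
        = V (e - (j : ℤ)) - (T 3 - T 1) * V (e - ((j : ℤ) + 1)) := by
      rw [hrec]; ring
    have key : ∀ n : ℤ, 0 ≤ n → (V (e - ((j : ℤ) + 2))).coeff n = 0 := by
      refine stepB (V (e - (j : ℤ))) (V (e - ((j : ℤ) + 1))) _ hw (Q j) ?_
      intro m hm
      have := Q (j + 1) m
      push_cast at this
      exact this hm
    rw [show e - ((j : ℕ) + 2 : ℕ) = e - ((j : ℤ) + 2) by push_cast; ring]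
    constructor
    · intro n hn
      by_contra hcon
      push_neg at hcon
      exact Finsupp.mem_support_iff.mp hn (key n (by omega))
    · intro h
      have h0' := key 0 le_rfl
      rw [h, one_apply_zero] at h0'
      exact one_ne_zero h0'
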